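/- Let c_{crit} = \exp(-\pi/\sqrt{3}). For every c with 0 < c < c_{crit}, there exists a unique k \in (0, 1/4) such that c^{2k}/(2\cos((2k+1)\pi/3)) = 1. -/

import Mathlib

open Real

noncomputable def auxf (L : ℝ) : ℝ → ℝ :=
  fun x => Real.exp (2*L*x) - 2*Real.cos ((2*x+1)*π/3)

private lemma hasDerivAt_aux (L k : ℝ) :
    HasDerivAt (auxf L)
      (2*L*Real.exp (2*L*k) + (4*π/3)*Real.sin ((2*k+1)*π/3)) k := by
  have h1 : HasDerivAt (fun x : ℝ => 2*L*x) (2*L) k := by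
    simpa using (hasDerivAt_id k).const_mul (2*L)
  have hexp : HasDerivAt (fun x : ℝ => Real.exp (2*L*x)) (Real.exp (2*L*k) * (2*L)) k :=
    (Real.hasDerivAt_exp (2*L*k)).comp k h1
  have h2 : HasDerivAt (fun x : ℝ => (2*x+1)*π/3) (2*π/3) k := by
    have := ((((hasDerivAt_id k).const_mul 2).add_const 1).mul_const π).div_const 3
    simpa using this.congr_deriv (by ring)
  have hcos : HasDerivAt (fun x : ℝ => Real.cos ((2*x+1)*π/3))
      (-Real.sin ((2*k+1)*π/3) * (2*π/3)) k :=
    h2.cos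
  have := hexp.sub (hcos.const_mul 2)
  unfold auxf
  exact this.congr_deriv (by ring)

private lemma hasDerivAt_aux2 (L k : ℝ) :
    HasDerivAt (fun x : ℝ => 2*L*Real.exp (2*L*x) + (4*π/3)*Real.sin ((2*x+1)*π/3))
      (4*L^2*Real.exp (2*L*k) + (8*π^2/9)*Real.cos ((2*k+1)*π/3)) k := by
  have h1 : HasDerivAt (fun x : ℝ => 2*L*x) (2*L) k := by
    simpa using (hasDerivAt_id k).const_mul (2*L)
  have hexp : HasDerivAt (fun x : ℝ => Real.exp (2*L*x)) (Real.exp (2*L*k) * (2*L)) k :=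
    (Real.hasDerivAt_exp (2*L*k)).comp k h1
  have h2 : HasDerivAt (fun x : ℝ => (2*x+1)*π/3) (2*π/3) k := by
    have := ((((hasDerivAt_id k).const_mul 2).add_const 1).mul_const π).div_const 3
    simpa using this.congr_deriv (by ring)
  have hsin : HasDerivAt (fun x : ℝ => Real.sin ((2*x+1)*π/3))
      (Real.cos ((2*k+1)*π/3) * (2*π/3)) k :=
    h2.sin
  have := (hexp.const_mul (2*L)).add (hsin.const_mul (4*π/3))
  exact this.congr_deriv (by ring)

private lemma auxf_zero (L : ℝ) : auxf L 0 = 0 := by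
  have h : (2*(0:ℝ)+1)*π/3 = π/3 := by ring
  simp [auxf, h, Real.cos_pi_div_three]

private lemma auxf_quarter_pos (L : ℝ) : 0 < auxf L (1/4) := by
  have h : (2*(1/4:ℝ)+1)*π/3 = π/2 := by ring
  unfold auxf
  rw [h, Real.cos_pi_div_two]
  simpa using Real.exp_pos (2*L*(1/4))

private lemma cos_pos_aux {k : ℝ} (hk0 : 0 < k) (hk1 : k < 1/4) :
    0 < Real.cos ((2*k+1)*π/3) := by
  have hπ := Real.pi_pos
  apply Real.cos_pos_of_mem_Ioo
  constructor
  · nlinarith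
  · nlinarith

private lemma auxf_strictConvexOn (L : ℝ) :
    StrictConvexOn ℝ (Set.Icc (0:ℝ) (1/4)) (auxf L) := by
  apply strictConvexOn_of_deriv2_pos (convex_Icc _ _)
  · apply Continuous.continuousOn
    unfold auxf
    fun_prop
  · intro x hx
    rw [interior_Icc] at hx
    have hd1 : deriv (auxf L) =
        fun x : ℝ => 2*L*Real.exp (2*L*x) + (4*π/3)*Real.sin ((2*x+1)*π/3) :=
      funext fun y => (hasDerivAt_aux L y).deriv
    have : deriv^[2] (auxf L) x = deriv (deriv (auxf L)) x := rfl
    rw [this, hd1, (hasDerivAt_aux2 L x).deriv]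
    have hc := cos_pos_aux hx.1 hx.2
    have h1 : (0:ℝ) ≤ 4*L^2*Real.exp (2*L*x) := by positivity
    have h2 : (0:ℝ) < (8*π^2/9)*Real.cos ((2*x+1)*π/3) := by
      have := Real.pi_pos
      positivity
    linarith

theorem stmt_6 (c : ℝ) (hc0 : 0 < c) (hc : c < Real.exp (-π / Real.sqrt 3)) :
    ∃! k : ℝ, k ∈ Set.Ioo (0:ℝ) (1/4) ∧
      c ^ (2 * k) / (2 * Real.cos ((2 * k + 1) * π / 3)) = 1 := by
  have hs3 : (0:ℝ) < Real.sqrt 3 := Real.sqrt_pos.mpr (by norm_num)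
  have hπ := Real.pi_pos
  set L := Real.log c with hLdef
  have hL : L < -π / Real.sqrt 3 := by
    have := Real.log_lt_log hc0 hc
    rwa [Real.log_exp] at this
  have hL3 : L * Real.sqrt 3 < -π := (lt_div_iff₀ hs3).mp hL
  -- rewrite rpow
  have hrw : ∀ k : ℝ, c ^ (2*k) = Real.exp (2*L*k) := by
    intro k
    rw [Real.rpow_def_of_pos hc0, ← hLdef]
    congr 1
    ring
  -- equation equivalence
  have heq : ∀ k ∈ Set.Ioo (0:ℝ) (1/4),
      (c ^ (2 * k) / (2 * Real.cos ((2 * k + 1) * π / 3)) = 1 ↔ auxf L k = 0) := by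
    intro k hk
    have hcp := cos_pos_aux hk.1 hk.2
    have hne : (2 * Real.cos ((2 * k + 1) * π / 3)) ≠ 0 := by positivity
    rw [div_eq_one_iff_eq hne, hrw k]
    unfold auxf
    rw [sub_eq_zero]
  have hconv := auxf_strictConvexOn L
  -- negative value near 0
  have hd0 : HasDerivAt (auxf L) (2*L*Real.exp (2*L*0) + (4*π/3)*Real.sin ((2*0+1)*π/3)) 0 :=
    hasDerivAt_aux L 0
  have hd0neg : 2*L*Real.exp (2*L*0) + (4*π/3)*Real.sin ((2*(0:ℝ)+1)*π/3) < 0 := by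
    have h1 : (2*(0:ℝ)+1)*π/3 = π/3 := by ring
    rw [h1, Real.sin_pi_div_three]
    have hsq : Real.sqrt 3 * Real.sqrt 3 = 3 := Real.mul_self_sqrt (by norm_num)
    have h2 : (2:ℝ)*L*Real.exp (2*L*0) = 2*L := by norm_num
    rw [h2]
    nlinarith
  rw [hasDerivAt_iff_tendsto_slope] at hd0
  have hev : ∀ᶠ x in nhdsWithin (0:ℝ) (Set.Ioi 0), slope (auxf L) 0 x < 0 :=
    (hd0.eventually_lt_const hd0neg).filter_mono
      (nhdsWithin_mono 0 (fun x hx => ne_of_gt hx))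
  have hev2 : ∀ᶠ x in nhdsWithin (0:ℝ) (Set.Ioi 0), x ∈ Set.Ioo (0:ℝ) (1/4) := by
    filter_upwards [self_mem_nhdsWithin,
      (eventually_lt_nhds (by norm_num : (0:ℝ) < 1/4)).filter_mono nhdsWithin_le_nhds]
      with x hx0 hx
    exact ⟨hx0, hx⟩
  obtain ⟨t, hts, htI⟩ := (hev.and hev2).exists
  have htneg : auxf L t < 0 := by
    have h := hts
    rw [slope_def_field, auxf_zero, sub_zero, sub_zero] at h
    rcases div_neg_iff.mp h with ⟨_, hb⟩ | ⟨ha, _⟩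
    · exact absurd htI.1 (not_lt.mpr (le_of_lt hb))
    · exact ha
  -- IVT
  have hcont : ContinuousOn (auxf L) (Set.Icc t (1/4)) := by
    apply Continuous.continuousOn
    unfold auxf
    fun_prop
  have h0mem : (0:ℝ) ∈ Set.Ioo (auxf L t) (auxf L (1/4)) := ⟨htneg, auxf_quarter_pos L⟩
  obtain ⟨k, hkI, hfk⟩ := intermediate_value_Ioo (le_of_lt htI.2) hcont h0mem
  have hkIoo : k ∈ Set.Ioo (0:ℝ) (1/4) := ⟨lt_trans htI.1 hkI.1, hkI.2⟩
  -- uniqueness via strict convexity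
  have key : ∀ a b : ℝ, 0 < a → a < b → b ≤ 1/4 → auxf L b = 0 → auxf L a < 0 := by
    intro a b ha hab hb hfb
    have hb0 : 0 < b := lt_trans ha hab
    have ht0 : 0 < a/b := div_pos ha hb0
    have ht1 : a/b < 1 := (div_lt_one hb0).mpr hab
    have h := hconv.2 (Set.left_mem_Icc.mpr (by norm_num)) (⟨le_of_lt hb0, hb⟩ : b ∈ Set.Icc (0:ℝ) (1/4))
      (ne_of_lt hb0) (by linarith : (0:ℝ) < 1 - a/b) ht0 (by ring)
    rw [smul_eq_mul, smul_eq_mul, smul_eq_mul, smul_eq_mul, auxf_zero, hfb] at h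
    have hpt : (1 - a/b) * 0 + a/b * b = a := by
      field_simp
      ring
    rw [hpt] at h
    linarith
  have huniq : ∀ a b : ℝ, a ∈ Set.Ioo (0:ℝ) (1/4) → b ∈ Set.Ioo (0:ℝ) (1/4) →
      auxf L a = 0 → auxf L b = 0 → a = b := by
    intro a b ha hb hfa hfb
    rcases lt_trichotomy a b with h | h | h
    · exact absurd hfa (ne_of_lt (key a b ha.1 h (le_of_lt hb.2) hfb))
    · exact h
    · exact absurd hfb (ne_of_lt (key b a hb.1 h (le_of_lt ha.2) hfa))
  refine ⟨k, ⟨hkIoo, (heq k hkIoo).mpr hfk⟩, ?_⟩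
  rintro y ⟨hy, hye⟩
  exact huniq y k hy hkIoo ((heq y hy).mp hye) hfk
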